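/- Let (𝕏,𝒳) be a measurable space, F a probability measure on 𝕏, (X_i)_{i≥1} an i.i.d. sequence with distribution F, and let τ = U_1 + ⋯ + U_n, where U_1,…,U_n are independent {0,1}-valued (Bernoulli) random variables, with (U_1,…,U_n) independent of (X_i)_{i≥1}. Let η = Σ_{i=1}^τ δ_{X_i} be the associated mixed sampled point process. Then for every finite collection B_1,…,B_m ∈ 𝒳 of pairwise disjoint measurable sets, the random vector (η(B_1),…,η(B_m)) = (Σ_{i=1}^τ 1{X_i ∈ B_1},…, Σ_{i=1}^τ 1{X_i ∈ B_m}) is negatively associated (NA). -/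

import Mathlib

open MeasureTheory ProbabilityTheory

/-- `f` depends only on the coordinates in `A`. -/
def DepOn {n : ℕ} (f : (Fin n → ℝ) → ℝ) (A : Set (Fin n)) : Prop :=
  ∀ x y : Fin n → ℝ, (∀ i ∈ A, x i = y i) → f x = f y

/-- `f` is bounded. -/
def IsBdd {α : Type*} (f : α → ℝ) : Prop :=
  ∃ C : ℝ, ∀ x, |f x| ≤ C

/-- A random vector `X = (X_1, …, X_n)` (under the measure `μ`) is negatively associated:
for every index set `A` and all bounded measurable functions `f, g`, nondecreasing in each
coordinate, depending only on the coordinates in `A` resp. `Aᶜ`, `Cov (f(X), g(X)) ≤ 0`. -/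
def IsNA {Ω : Type*} [MeasurableSpace Ω] (μ : Measure Ω) {n : ℕ}
    (X : Ω → Fin n → ℝ) : Prop :=
  ∀ (A : Set (Fin n)) (f g : (Fin n → ℝ) → ℝ),
    Measurable f → Measurable g → Monotone f → Monotone g → IsBdd f → IsBdd g →
    DepOn f A → DepOn g Aᶜ →
    ∫ ω, f (X ω) * g (X ω) ∂μ ≤ (∫ ω, f (X ω) ∂μ) * ∫ ω, g (X ω) ∂μ

/-- single-trial covariance inequality (pure algebra). -/
lemma single_trial {O : Type*} [Fintype O] (w F G : O → ℝ) (F0 G0 : ℝ)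
    (hw : ∀ o, 0 ≤ w o) (hw1 : ∑ o, w o = 1)
    (hF : ∀ o, F0 ≤ F o) (hG : ∀ o, G0 ≤ G o)
    (hFG : ∀ o, (F o - F0) * (G o - G0) = 0) :
    ∑ o, w o * (F o * G o) ≤ (∑ o, w o * F o) * (∑ o, w o * G o) := by
  classical
  set a : O → ℝ := fun o => F o - F0 with ha
  set b : O → ℝ := fun o => G o - G0 with hb
  have hSa : 0 ≤ ∑ o, w o * a o :=
    Finset.sum_nonneg fun o _ => mul_nonneg (hw o) (sub_nonneg.2 (hF o))
  have hSb : 0 ≤ ∑ o, w o * b o :=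
    Finset.sum_nonneg fun o _ => mul_nonneg (hw o) (sub_nonneg.2 (hG o))
  have hwF : ∑ o, w o * F o = F0 + ∑ o, w o * a o := by
    have h : ∀ o ∈ Finset.univ, w o * F o = w o * F0 + w o * a o := by
      intro o _; simp only [ha]; ring
    rw [Finset.sum_congr rfl h, Finset.sum_add_distrib, ← Finset.sum_mul, hw1, one_mul]
  have hwG : ∑ o, w o * G o = G0 + ∑ o, w o * b o := by
    have h : ∀ o ∈ Finset.univ, w o * G o = w o * G0 + w o * b o := by
      intro o _; simp only [hb]; ring
    rw [Finset.sum_congr rfl h, Finset.sum_add_distrib, ← Finset.sum_mul, hw1, one_mul]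
  have hwFG : ∑ o, w o * (F o * G o)
      = F0 * G0 + F0 * (∑ o, w o * b o) + G0 * (∑ o, w o * a o) := by
    have h : ∀ o ∈ Finset.univ,
        w o * (F o * G o) = w o * (F0 * G0) + F0 * (w o * b o) + G0 * (w o * a o) := by
      intro o _
      have h0 := hFG o
      have : F o * G o = F0 * G0 + F0 * b o + G0 * a o := by
        simp only [ha, hb]; nlinarith [h0]
      rw [this]; ring
    rw [Finset.sum_congr rfl h, Finset.sum_add_distrib, Finset.sum_add_distrib,
      ← Finset.sum_mul, hw1, one_mul, ← Finset.mul_sum, ← Finset.mul_sum]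
  rw [hwF, hwG, hwFG]
  nlinarith [mul_nonneg hSa hSb]

def eVec (m : ℕ) (j : Fin m) : Fin m → ℝ := fun j' => if j' = j then 1 else 0

lemma eVec_nonneg {m : ℕ} (j : Fin m) : (0 : Fin m → ℝ) ≤ eVec m j := by
  intro j'; simp only [eVec]; positivity

/-- Core combinatorial lemma: sum of independent "at most one coordinate bumped" trials
is negatively associated (weighted-sum formulation). -/
lemma core {O : Type*} [Fintype O] {m : ℕ} (z : O → Fin m → ℝ)
    (hz : ∀ o, z o = 0 ∨ ∃ j, z o = eVec m j) (A : Set (Fin m)) :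
    ∀ (n : ℕ) (w : Fin n → O → ℝ), (∀ i o, 0 ≤ w i o) → (∀ i, ∑ o, w i o = 1) →
    ∀ f g : (Fin m → ℝ) → ℝ, Monotone f → Monotone g → DepOn f A → DepOn g Aᶜ →
    ∑ t : Fin n → O, (∏ i, w i (t i)) * (f (∑ i, z (t i)) * g (∑ i, z (t i)))
      ≤ (∑ t : Fin n → O, (∏ i, w i (t i)) * f (∑ i, z (t i))) *
        (∑ t : Fin n → O, (∏ i, w i (t i)) * g (∑ i, z (t i))) := by
  intro n
  induction n with
  | zero =>
    intro w hw hw1 f g hf hg hfA hgA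
    simp
  | succ n IH =>
    intro w hw hw1 f g hf hg hfA hgA
    classical
    -- reindex sums over `Fin (n+1) → O` as sums over `O × (Fin n → O)`
    have hre : ∀ K : (Fin (n + 1) → O) → ℝ,
        ∑ t : Fin (n + 1) → O, K t
          = ∑ o : O, ∑ t : Fin n → O, K (Fin.cons o t) := by
      intro K
      calc ∑ t : Fin (n + 1) → O, K t
          = ∑ p : O × (Fin n → O), K (Fin.consEquiv (fun _ => O) p) :=
            (Equiv.sum_comp (Fin.consEquiv (fun _ => O)) K).symm
        _ = ∑ o : O, ∑ t : Fin n → O, K (Fin.cons o t) := by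
            rw [Fintype.sum_prod_type]
            exact Finset.sum_congr rfl fun o _ => Finset.sum_congr rfl fun t _ => by
              simp [Fin.consEquiv]
    have hsplit : ∀ (o : O) (t : Fin n → O),
        (∏ i : Fin (n+1), w i ((Fin.cons o t : Fin (n+1) → O) i)) = w 0 o * ∏ i : Fin n, w i.succ (t i) := by
      intro o t
      rw [Fin.prod_univ_succ]
      simp
    have hzsplit : ∀ (o : O) (t : Fin n → O),
        (∑ i : Fin (n+1), z ((Fin.cons o t : Fin (n+1) → O) i)) = z o + ∑ i : Fin n, z (t i) := by
      intro o t
      rw [Fin.sum_univ_succ]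
      simp
    -- abbreviations
    set P : (Fin n → O) → ℝ := fun t => ∏ i : Fin n, w i.succ (t i) with hP
    set S : (Fin n → O) → (Fin m → ℝ) := fun t => ∑ i : Fin n, z (t i) with hS
    have hPnn : ∀ t, 0 ≤ P t := fun t => Finset.prod_nonneg fun i _ => hw _ _
    have hznn : ∀ o, (0 : Fin m → ℝ) ≤ z o := by
      intro o
      rcases hz o with h | ⟨j, h⟩
      · rw [h]
      · rw [h]; exact eVec_nonneg j
    set Ff : O → ℝ := fun o => ∑ t : Fin n → O, P t * f (z o + S t) with hFf
    set Gg : O → ℝ := fun o => ∑ t : Fin n → O, P t * g (z o + S t) with hGg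
    set F0 : ℝ := ∑ t : Fin n → O, P t * f (S t) with hF0
    set G0 : ℝ := ∑ t : Fin n → O, P t * g (S t) with hG0
    have hrw : ∀ h : (Fin m → ℝ) → ℝ,
        ∑ t : Fin (n+1) → O, (∏ i, w i (t i)) * h (∑ i, z (t i))
          = ∑ o : O, w 0 o * ∑ t : Fin n → O, P t * h (z o + S t) := by
      intro h
      rw [hre (fun t => (∏ i, w i (t i)) * h (∑ i, z (t i)))]
      refine Finset.sum_congr rfl fun o _ => ?_
      rw [Finset.mul_sum]
      refine Finset.sum_congr rfl fun t _ => ?_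
      rw [hsplit, hzsplit]
      ring
    rw [hrw f, hrw g, hrw (fun x => f x * g x)]
    -- inner inequality from IH
    have hinner : ∀ o : O,
        ∑ t : Fin n → O, P t * (f (z o + S t) * g (z o + S t)) ≤ Ff o * Gg o := by
      intro o
      have := IH (fun i => w i.succ) (fun i o => hw _ _) (fun i => hw1 _)
        (fun x => f (z o + x)) (fun x => g (z o + x))
        (fun x y hxy => hf (add_le_add le_rfl hxy))
        (fun x y hxy => hg (add_le_add le_rfl hxy))
        (fun x y hxy => hfA _ _ (fun i hi => by simp [hxy i hi]))
        (fun x y hxy => hgA _ _ (fun i hi => by simp [hxy i hi]))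
      exact this
    have step1 : ∑ o : O, w 0 o * ∑ t : Fin n → O, P t * (f (z o + S t) * g (z o + S t))
        ≤ ∑ o : O, w 0 o * (Ff o * Gg o) :=
      Finset.sum_le_sum fun o _ => mul_le_mul_of_nonneg_left (hinner o) (hw 0 o)
    refine le_trans step1 ?_
    -- outer inequality from single_trial
    refine single_trial (w 0) Ff Gg F0 G0 (hw 0) (hw1 0) ?_ ?_ ?_
    · intro o
      refine Finset.sum_le_sum fun t _ => ?_
      exact mul_le_mul_of_nonneg_left (hf (by simpa using add_le_add_right (hznn o) (S t))) (hPnn t)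
    · intro o
      refine Finset.sum_le_sum fun t _ => ?_
      exact mul_le_mul_of_nonneg_left (hg (by simpa using add_le_add_right (hznn o) (S t))) (hPnn t)
    · intro o
      rcases hz o with h | ⟨j, h⟩
      · have : Ff o = F0 := by
          simp only [hFf, hF0, h, zero_add]
        rw [this, sub_self, zero_mul]
      · by_cases hj : j ∈ A
        · have : Gg o = G0 := by
            refine Finset.sum_congr rfl fun t _ => ?_
            congr 1
            refine hgA _ _ fun i hi => ?_
            have hij : i ≠ j := fun hij => hi (hij ▸ hj)
            simp [h, eVec, hij]
          rw [this, sub_self, mul_zero]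
        · have : Ff o = F0 := by
            refine Finset.sum_congr rfl fun t _ => ?_
            congr 1
            refine hfA _ _ fun i hi => ?_
            have hij : i ≠ j := fun hij => hj (hij ▸ hi)
            simp [h, eVec, hij]
          rw [this, sub_self, zero_mul]

lemma exists_perm_mem_iff {α : Type*} [Fintype α] [DecidableEq α] (s t : Finset α)
    (h : s.card = t.card) : ∃ σ : Equiv.Perm α, ∀ i, i ∈ t ↔ σ i ∈ s := by
  classical
  have h1 : Fintype.card {x // x ∈ t} = Fintype.card {x // x ∈ s} := by
    simp [Fintype.card_coe, h]
  have h2 : Fintype.card {x // ¬ x ∈ t} = Fintype.card {x // ¬ x ∈ s} := by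
    rw [Fintype.card_subtype_compl, Fintype.card_subtype_compl]
    simp [Fintype.card_coe, h]
  let e1 := Fintype.equivOfCardEq h1
  let e2 := Fintype.equivOfCardEq h2
  refine ⟨(Equiv.sumCompl (· ∈ t)).symm.trans ((e1.sumCongr e2).trans (Equiv.sumCompl (· ∈ s))), ?_⟩
  intro i
  by_cases hi : i ∈ t
  · simp only [Equiv.trans_apply, Equiv.sumCompl_symm_apply_of_pos hi, Equiv.sumCongr_apply,
      Sum.map_inl, Equiv.sumCompl_apply_inl]
    exact ⟨fun _ => (e1 ⟨i, hi⟩).2, fun _ => hi⟩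
  · simp only [Equiv.trans_apply, Equiv.sumCompl_symm_apply_of_neg hi, Equiv.sumCongr_apply,
      Sum.map_inr, Equiv.sumCompl_apply_inr]
    exact ⟨fun h' => absurd h' hi, fun h' => absurd h' (e2 ⟨i, hi⟩).2⟩

lemma card_filter_val_lt (n k : ℕ) (hk : k ≤ n) :
    (Finset.univ.filter (fun i : Fin n => (i : ℕ) < k)).card = k := by
  classical
  rw [← Finset.card_range k]
  apply Finset.card_bij (fun (i : Fin n) _ => (i : ℕ))
  · intro a ha; simp only [Finset.mem_filter] at ha; simpa using ha.2
  · intro a ha b hb hab; exact Fin.val_injective hab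
  · intro b hb
    simp only [Finset.mem_range] at hb
    exact ⟨⟨b, lt_of_lt_of_le hb hk⟩, by simp [hb], rfl⟩

lemma sum_perm {O : Type*} [Fintype O] {n : ℕ} (p : O → ℝ) (σ : Equiv.Perm (Fin n))
    (H : (Fin n → O) → ℝ) :
    ∑ c : Fin n → O, (∏ i, p (c i)) * H (fun i => c (σ i))
      = ∑ c : Fin n → O, (∏ i, p (c i)) * H c := by
  classical
  have key := Equiv.sum_comp (Equiv.arrowCongr σ (Equiv.refl O)).symm
    (fun c : Fin n → O => (∏ i, p (c i)) * H c)
  rw [← key]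
  refine Finset.sum_congr rfl fun c _ => ?_
  have h1 : (Equiv.arrowCongr σ (Equiv.refl O)).symm c = fun i => c (σ i) := by
    funext i; simp [Equiv.arrowCongr]
  rw [h1]
  congr 1
  exact (Equiv.prod_comp σ (fun i => p (c i))).symm

noncomputable def PhiFun (n m : ℕ) (u : Fin n → Fin 2) (c : Fin n → Option (Fin m)) :
    Fin m → ℝ :=
  fun j => ∑ i : Fin n, if (i : ℕ) < (∑ k, ((u k : ℕ))) ∧ c i = some j then 1 else 0

noncomputable def PsiFun (n m : ℕ) (u : Fin n → Fin 2) (c : Fin n → Option (Fin m)) :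
    Fin m → ℝ :=
  fun j => ∑ i : Fin n, if u i = 1 ∧ c i = some j then 1 else 0

lemma phi_psi_exchange {n m : ℕ} (qj : Option (Fin m) → ℝ) (u : Fin n → Fin 2)
    (H : (Fin m → ℝ) → ℝ) :
    ∑ c : Fin n → Option (Fin m), (∏ i, qj (c i)) * H (PhiFun n m u c)
      = ∑ c : Fin n → Option (Fin m), (∏ i, qj (c i)) * H (PsiFun n m u c) := by
  classical
  set k : ℕ := ∑ i, ((u i : ℕ)) with hk
  have hval : ∀ a : Fin 2, (a : ℕ) = if a = 1 then 1 else 0 := by decide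
  have hcards : (Finset.univ.filter (fun i : Fin n => u i = 1)).card = k := by
    rw [hk, Finset.sum_congr rfl (fun i _ => hval (u i))]
    simp [Finset.sum_boole]
  have hkn : k ≤ n := by
    rw [← hcards]
    simpa using Finset.card_filter_le Finset.univ (fun i : Fin n => u i = 1)
  have hcardt : (Finset.univ.filter (fun i : Fin n => (i : ℕ) < k)).card
      = (Finset.univ.filter (fun i : Fin n => u i = 1)).card := by
    rw [card_filter_val_lt n k hkn, hcards]
  obtain ⟨σ, hσ⟩ := exists_perm_mem_iff (Finset.univ.filter (fun i : Fin n => u i = 1))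
      (Finset.univ.filter (fun i : Fin n => (i : ℕ) < k)) hcardt.symm
  have hσ' : ∀ i : Fin n, (i : ℕ) < k ↔ u (σ i) = 1 := by
    intro i
    have := hσ i
    simpa using this
  have key : ∀ c : Fin n → Option (Fin m), PhiFun n m u c = PsiFun n m u (fun i => c (σ.symm i)) := by
    intro c
    funext j
    have := Equiv.sum_comp σ (fun i => if u i = 1 ∧ c (σ.symm i) = some j then (1:ℝ) else 0)
    rw [PhiFun, PsiFun, ← this]
    refine Finset.sum_congr rfl fun i _ => ?_
    simp only [Equiv.symm_apply_apply]
    exact if_congr (and_congr_left' (hσ' i)) rfl rfl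
  calc ∑ c : Fin n → Option (Fin m), (∏ i, qj (c i)) * H (PhiFun n m u c)
      = ∑ c : Fin n → Option (Fin m), (∏ i, qj (c i)) * H (PsiFun n m u (fun i => c (σ.symm i))) := by
        exact Finset.sum_congr rfl fun c _ => by rw [key c]
    _ = ∑ c : Fin n → Option (Fin m), (∏ i, qj (c i)) * H (PsiFun n m u c) :=
        sum_perm qj σ.symm (fun d => H (PsiFun n m u d))

lemma psi_core {n m : ℕ} (qu : Fin n → Fin 2 → ℝ) (qj : Option (Fin m) → ℝ)
    (hqu : ∀ i a, 0 ≤ qu i a) (hqj : ∀ o, 0 ≤ qj o)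
    (hqu1 : ∀ i, ∑ a, qu i a = 1) (hqj1 : ∑ o, qj o = 1)
    (A : Set (Fin m)) (f g : (Fin m → ℝ) → ℝ)
    (hf : Monotone f) (hg : Monotone g) (hfA : DepOn f A) (hgA : DepOn g Aᶜ) :
    ∑ u : Fin n → Fin 2, ∑ c : Fin n → Option (Fin m),
        ((∏ i, qu i (u i)) * (∏ i, qj (c i))) * (f (PsiFun n m u c) * g (PsiFun n m u c))
      ≤ (∑ u : Fin n → Fin 2, ∑ c : Fin n → Option (Fin m),
          ((∏ i, qu i (u i)) * (∏ i, qj (c i))) * f (PsiFun n m u c)) *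
        (∑ u : Fin n → Fin 2, ∑ c : Fin n → Option (Fin m),
          ((∏ i, qu i (u i)) * (∏ i, qj (c i))) * g (PsiFun n m u c)) := by
  classical
  set O := Fin 2 × Option (Fin m) with hO
  set z : O → Fin m → ℝ := fun o j => if o.1 = 1 ∧ o.2 = some j then 1 else 0 with hz0
  set w : Fin n → O → ℝ := fun i o => qu i o.1 * qj o.2 with hw0
  have hconv : ∀ H : (Fin m → ℝ) → ℝ,
      ∑ t : Fin n → O, (∏ i, w i (t i)) * H (∑ i, z (t i))
        = ∑ u : Fin n → Fin 2, ∑ c : Fin n → Option (Fin m),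
            ((∏ i, qu i (u i)) * (∏ i, qj (c i))) * H (PsiFun n m u c) := by
    intro H
    set e := Equiv.arrowProdEquivProdArrow (Fin n) (fun _ => Fin 2) (fun _ => Option (Fin m)) with he
    calc ∑ t : Fin n → O, (∏ i, w i (t i)) * H (∑ i, z (t i))
        = ∑ p : (Fin n → Fin 2) × (Fin n → Option (Fin m)),
            (∏ i, w i (e.symm p i)) * H (∑ i, z (e.symm p i)) :=
          (Equiv.sum_comp e.symm (fun t => (∏ i, w i (t i)) * H (∑ i, z (t i)))).symm
      _ = _ := by
          rw [Fintype.sum_prod_type]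
          refine Finset.sum_congr rfl fun u _ => Finset.sum_congr rfl fun c _ => ?_
          have h1 : ∀ i, e.symm (u, c) i = (u i, c i) := fun i => rfl
          simp only [h1]
          congr 1
          · rw [hw0, ← Finset.prod_mul_distrib]
          · congr 1
            funext j
            rw [Finset.sum_apply]
            rfl
  rw [← hconv f, ← hconv g, ← hconv (fun x => f x * g x)]
  refine core z ?_ A n w ?_ ?_ f g hf hg hfA hgA
  · rintro ⟨a, o⟩
    by_cases ha : a = 1
    · cases o with
      | none => left; funext j; simp [hz0]
      | some j =>
        right; exact ⟨j, by funext j'; simp [hz0, eVec, ha, eq_comm]⟩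
    · left; funext j; simp [hz0, ha]
  · intro i o; exact mul_nonneg (hqu i o.1) (hqj o.2)
  · intro i
    rw [hw0]
    calc ∑ o : O, qu i o.1 * qj o.2
        = (∑ a : Fin 2, qu i a) * (∑ o : Option (Fin m), qj o) := by
          rw [Finset.sum_mul_sum, Fintype.sum_prod_type]
      _ = 1 := by rw [hqu1 i, hqj1, one_mul]

lemma integral_eq_sum_fibers {Ω : Type*} [MeasurableSpace Ω] (μ : Measure Ω)
    [IsProbabilityMeasure μ] {E : Type*} [Fintype E] [DecidableEq E] (V : Ω → E)
    (hV : ∀ v : E, MeasurableSet (V ⁻¹' {v})) (h : E → ℝ) :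
    ∫ ω, h (V ω) ∂μ = ∑ v : E, (μ (V ⁻¹' {v})).toReal * h v := by
  classical
  have hdec : ∀ ω, h (V ω) = ∑ v : E, Set.indicator (V ⁻¹' {v}) (fun _ => h v) ω := by
    intro ω
    rw [Finset.sum_congr rfl (fun v (_ : v ∈ Finset.univ) => Set.indicator_apply _ _ _)]
    simp only [Set.mem_preimage, Set.mem_singleton_iff]
    rw [Finset.sum_ite_eq Finset.univ (V ω) h]
    simp
  calc ∫ ω, h (V ω) ∂μ
      = ∫ ω, ∑ v : E, Set.indicator (V ⁻¹' {v}) (fun _ => h v) ω ∂μ :=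
        integral_congr_ae (Filter.Eventually.of_forall hdec)
    _ = ∑ v : E, ∫ ω, Set.indicator (V ⁻¹' {v}) (fun _ => h v) ω ∂μ :=
        integral_finset_sum _ fun v _ => (integrable_const (h v)).indicator (hV v)
    _ = ∑ v : E, (μ (V ⁻¹' {v})).toReal * h v := by
        refine Finset.sum_congr rfl fun v _ => ?_
        rw [integral_indicator_const (h v) (hV v), smul_eq_mul, measureReal_def]

/-- for a mixed sampled point process `η = ∑_{i=1}^τ δ_{X_i}` with i.i.d.
samples `X_i` of distribution `F` and `τ = U_1 + ⋯ + U_n` a sum of independent Bernoulli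
variables independent of `(X_i)`, the count vector `(η(B_1), …, η(B_m))` over pairwise
disjoint measurable sets is negatively associated. -/
theorem stmt3 {Ω : Type*} [MeasurableSpace Ω] (μ : Measure Ω) [IsProbabilityMeasure μ]
    {𝕏 : Type*} [MeasurableSpace 𝕏] (F : Measure 𝕏) [IsProbabilityMeasure F]
    (X : ℕ → Ω → 𝕏) (hXmeas : ∀ i, Measurable (X i))
    (hXindep : iIndepFun X μ)
    (hXlaw : ∀ i, Measure.map (X i) μ = F)
    {n : ℕ} (U : Fin n → Ω → ℕ) (hUmeas : ∀ i, Measurable (U i))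
    (hU01 : ∀ i ω, U i ω ≤ 1)
    (hUindep : iIndepFun U μ)
    (hUX : IndepFun (fun ω => fun i => U i ω) (fun ω => fun i => X i ω) μ)
    {m : ℕ} (B : Fin m → Set 𝕏) (hB : ∀ j, MeasurableSet (B j))
    (hBdisj : ∀ j j', j ≠ j' → Disjoint (B j) (B j')) :
    IsNA μ (fun ω j =>
      ∑ i ∈ Finset.range (∑ k, U k ω), (B j).indicator (fun _ => (1 : ℝ)) (X i ω)) := by
  classical
  intro A f g _hfm _hgm hfmono hgmono _hfb _hgb hfA hgA
  set jt : 𝕏 → Option (Fin m) :=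
    fun x => if h : ∃ j, x ∈ B j then some h.choose else none with hjtdef
  have hjt_some : ∀ x j, jt x = some j ↔ x ∈ B j := by
    intro x j
    constructor
    · intro h
      by_cases hx : ∃ j', x ∈ B j'
      · rw [hjtdef] at h
        simp only [dif_pos hx] at h
        have hc := hx.choose_spec
        rwa [Option.some_injective _ h] at hc
      · exfalso
        rw [hjtdef] at h
        simp only [dif_neg hx] at h
        exact nomatch h
    · intro hx
      have hex : ∃ j', x ∈ B j' := ⟨j, hx⟩
      have hc := hex.choose_spec
      have hcj : hex.choose = j := by
        by_contra hne
        exact (Set.disjoint_left.1 (hBdisj _ _ hne)) hc hx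
      rw [hjtdef]
      simp only [dif_pos hex, hcj]
  have hjt_pre : ∀ o : Option (Fin m), MeasurableSet (jt ⁻¹' {o}) := by
    intro o
    cases o with
    | none =>
      have hset : jt ⁻¹' {none} = (⋃ j, B j)ᶜ := by
        ext x
        simp only [Set.mem_preimage, Set.mem_singleton_iff, Set.mem_compl_iff, Set.mem_iUnion,
          not_exists]
        constructor
        · intro h j hj
          rw [(hjt_some x j).2 hj] at h
          exact Option.some_ne_none j h
        · intro h
          rw [hjtdef]
          simp only [dif_neg (not_exists.2 h)]
      rw [hset]
      exact (MeasurableSet.iUnion fun j => hB j).compl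
    | some j =>
      have hset : jt ⁻¹' {some j} = B j := Set.ext fun x => by
        simp only [Set.mem_preimage, Set.mem_singleton_iff]
        exact hjt_some x j
      rw [hset]; exact hB j
  set bu : ℕ → Fin 2 := fun k => if k = 1 then 1 else 0 with hbudef
  set Vu : Ω → Fin n → Fin 2 := fun ω i => bu (U i ω) with hVudef
  set Vc : Ω → Fin n → Option (Fin m) := fun ω i => jt (X i ω) with hVcdef
  set V : Ω → (Fin n → Fin 2) × (Fin n → Option (Fin m)) := fun ω => (Vu ω, Vc ω) with hVdef
  have hbuval : ∀ (i : Fin n) (ω : Ω), ((bu (U i ω) : Fin 2) : ℕ) = U i ω := by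
    intro i ω
    have h01 : U i ω = 0 ∨ U i ω = 1 := by have := hU01 i ω; omega
    rcases h01 with h | h <;> simp [hbudef, h]
  -- identification of the count vector
  have hT : ∀ ω, (fun j => ∑ i ∈ Finset.range (∑ k, U k ω),
      (B j).indicator (fun _ => (1 : ℝ)) (X i ω)) = PhiFun n m (Vu ω) (Vc ω) := by
    intro ω
    funext j
    have hτ : ∑ k, ((Vu ω k : ℕ)) = ∑ k, U k ω :=
      Finset.sum_congr rfl fun k _ => by rw [hVudef]; exact hbuval k ω
    have hτn : ∑ k, U k ω ≤ n := by
      calc ∑ k, U k ω ≤ ∑ _k : Fin n, 1 := Finset.sum_le_sum fun k _ => hU01 k ω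
        _ = n := by simp
    simp only [PhiFun]
    have hterm : ∀ i : Fin n,
        (if (i : ℕ) < (∑ k, ((Vu ω k : ℕ))) ∧ Vc ω i = some j then (1:ℝ) else 0)
          = if (i : ℕ) < ∑ k, U k ω then (B j).indicator (fun _ => (1:ℝ)) (X (i : ℕ) ω) else 0 := by
      intro i
      rw [hτ]
      by_cases h1 : (i : ℕ) < ∑ k, U k ω
      · simp only [h1, true_and, if_true]
        rw [hVcdef]
        simp only [Set.indicator_apply]
        by_cases h2 : X (i : ℕ) ω ∈ B j
        · rw [if_pos ((hjt_some _ _).2 h2), if_pos h2]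
        · rw [if_neg (fun hc => h2 ((hjt_some _ _).1 hc)), if_neg h2]
      · simp [h1]
    rw [Finset.sum_congr rfl fun i _ => hterm i,
      Fin.sum_univ_eq_sum_range
        (fun i => if i < ∑ k, U k ω then (B j).indicator (fun _ => (1:ℝ)) (X i ω) else 0) n,
      ← Finset.sum_subset (Finset.range_subset_range.2 hτn)
        (fun x _ hx => if_neg (fun hlt => hx (Finset.mem_range.2 hlt)))]
    exact Finset.sum_congr rfl fun i hi => (if_pos (Finset.mem_range.1 hi)).symm
  -- fiber events
  set Su : (Fin n → Fin 2) → Set (Fin n → ℕ) := fun u => {y | ∀ i, bu (y i) = u i} with hSud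
  set Sxs : (Fin n → Option (Fin m)) → Set (ℕ → 𝕏) :=
    fun c => {y | ∀ i : Fin n, jt (y (i : ℕ)) = c i} with hSxd
  have hSu_meas : ∀ u, MeasurableSet (Su u) := by
    intro u
    have : Su u = ⋂ i, (fun y : Fin n → ℕ => y i) ⁻¹' (bu ⁻¹' {u i}) := by
      ext y; simp [hSud]
    rw [this]
    exact MeasurableSet.iInter fun i => (measurable_pi_apply i) .of_discrete
  have hSx_meas : ∀ c, MeasurableSet (Sxs c) := by
    intro c
    have : Sxs c = ⋂ i : Fin n, (fun y : ℕ → 𝕏 => y (i : ℕ)) ⁻¹' (jt ⁻¹' {c i}) := by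
      ext y; simp [hSxd]
    rw [this]
    exact MeasurableSet.iInter fun i => (measurable_pi_apply (i : ℕ)) (hjt_pre (c i))
  have hsetV : ∀ u c, V ⁻¹' {(u, c)}
      = ((fun ω => fun i => U i ω) ⁻¹' (Su u)) ∩ ((fun ω => fun i => X i ω) ⁻¹' (Sxs c)) := by
    intro u c
    ext ω
    simp only [Set.mem_preimage, Set.mem_singleton_iff, Set.mem_inter_iff, hVdef, hVudef, hVcdef,
      hSud, hSxd, Prod.mk.injEq, funext_iff, Set.mem_setOf_eq]
  have hVfib_meas : ∀ v : (Fin n → Fin 2) × (Fin n → Option (Fin m)),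
      MeasurableSet (V ⁻¹' {v}) := by
    rintro ⟨u, c⟩
    rw [hsetV u c]
    exact ((measurable_pi_lambda _ fun i => hUmeas i) (hSu_meas u)).inter
      ((measurable_pi_lambda _ fun i => hXmeas i) (hSx_meas c))
  have hfiber : ∀ (u : Fin n → Fin 2) (c : Fin n → Option (Fin m)),
      μ (V ⁻¹' {(u, c)})
        = (∏ i, μ ((fun ω => bu (U i ω)) ⁻¹' {u i})) * (∏ i, F (jt ⁻¹' {c i})) := by
    intro u c
    rw [hsetV u c, hUX.measure_inter_preimage_eq_mul (Su u) (Sxs c) (hSu_meas u) (hSx_meas c)]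
    congr 1
    · have h1 : (fun ω => fun i => U i ω) ⁻¹' (Su u)
          = ⋂ i ∈ Finset.univ, (U i) ⁻¹' (bu ⁻¹' {u i}) := by
        ext ω; simp [hSud]
      rw [h1, hUindep.measure_inter_preimage_eq_mul Finset.univ
        (fun i _ => MeasurableSet.of_discrete)]
      exact Finset.prod_congr rfl fun i _ => rfl
    · set sets' : ℕ → Set 𝕏 := fun k => if h : k < n then jt ⁻¹' {c ⟨k, h⟩} else Set.univ
        with hsets'
      have h2 : (fun ω => fun i : ℕ => X i ω) ⁻¹' (Sxs c)
          = ⋂ k ∈ Finset.range n, (X k) ⁻¹' (sets' k) := by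
        ext ω
        simp only [Set.mem_preimage, hSxd, Set.mem_setOf_eq, Set.mem_iInter, Finset.mem_range]
        constructor
        · intro h k hk
          rw [hsets']
          simp only [dif_pos hk]
          exact h ⟨k, hk⟩
        · intro h i
          have := h (i : ℕ) i.isLt
          rw [hsets'] at this
          simp only [dif_pos i.isLt] at this
          simpa using this
      have hsetsm : ∀ k, k ∈ Finset.range n → MeasurableSet (sets' k) := by
        intro k hk
        rw [hsets']
        simp only [dif_pos (Finset.mem_range.1 hk)]
        exact hjt_pre _
      rw [h2, hXindep.measure_inter_preimage_eq_mul (Finset.range n) hsetsm,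
        ← Fin.prod_univ_eq_prod_range (fun k => μ ((X k) ⁻¹' (sets' k))) n]
      refine Finset.prod_congr rfl fun i _ => ?_
      have hsi : sets' (i : ℕ) = jt ⁻¹' {c i} := by
        rw [hsets']
        simp only [dif_pos i.isLt, Fin.eta]
      rw [hsi, ← hXlaw (i : ℕ), Measure.map_apply (hXmeas _) (hjt_pre _)]
  -- integrals as finite sums
  have hint : ∀ h : (Fin m → ℝ) → ℝ,
      ∫ ω, h (PhiFun n m (Vu ω) (Vc ω)) ∂μ
        = ∑ u : Fin n → Fin 2, ∑ c : Fin n → Option (Fin m),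
            (μ (V ⁻¹' {(u, c)})).toReal * h (PhiFun n m u c) := by
    intro h
    have := integral_eq_sum_fibers μ V hVfib_meas (fun v => h (PhiFun n m v.1 v.2))
    rw [Fintype.sum_prod_type] at this
    exact this
  -- rewrite the goal
  simp only [hT]
  have E1 : ∫ ω, f (PhiFun n m (Vu ω) (Vc ω)) * g (PhiFun n m (Vu ω) (Vc ω)) ∂μ
      = ∑ u : Fin n → Fin 2, ∑ c : Fin n → Option (Fin m),
          (μ (V ⁻¹' {(u, c)})).toReal * (f (PhiFun n m u c) * g (PhiFun n m u c)) := by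
    simpa using hint (fun x => f x * g x)
  rw [E1, hint f, hint g]
  -- weights
  set qu : Fin n → Fin 2 → ℝ := fun i a => (μ ((fun ω => bu (U i ω)) ⁻¹' {a})).toReal with hqud
  set qj : Option (Fin m) → ℝ := fun o => (F (jt ⁻¹' {o})).toReal with hqjd
  have hWeq : ∀ u c, (μ (V ⁻¹' {(u, c)})).toReal = (∏ i, qu i (u i)) * (∏ i, qj (c i)) := by
    intro u c
    rw [hfiber u c, ENNReal.toReal_mul, ENNReal.toReal_prod, ENNReal.toReal_prod]
  simp only [hWeq]
  -- exchangeability: replace PhiFun by PsiFun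
  have hex : ∀ (H : (Fin m → ℝ) → ℝ) (u : Fin n → Fin 2),
      ∑ c : Fin n → Option (Fin m),
          ((∏ i, qu i (u i)) * (∏ i, qj (c i))) * H (PhiFun n m u c)
        = ∑ c : Fin n → Option (Fin m),
            ((∏ i, qu i (u i)) * (∏ i, qj (c i))) * H (PsiFun n m u c) := by
    intro H u
    calc ∑ c : Fin n → Option (Fin m),
            ((∏ i, qu i (u i)) * (∏ i, qj (c i))) * H (PhiFun n m u c)
        = (∏ i, qu i (u i)) * ∑ c : Fin n → Option (Fin m),
            (∏ i, qj (c i)) * H (PhiFun n m u c) := by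
          rw [Finset.mul_sum]
          exact Finset.sum_congr rfl fun c _ => by ring
      _ = (∏ i, qu i (u i)) * ∑ c : Fin n → Option (Fin m),
            (∏ i, qj (c i)) * H (PsiFun n m u c) := by rw [phi_psi_exchange qj u H]
      _ = _ := by
          rw [Finset.mul_sum]
          exact Finset.sum_congr rfl fun c _ => by ring
  have convS : ∀ H : (Fin m → ℝ) → ℝ,
      (∑ u : Fin n → Fin 2, ∑ c : Fin n → Option (Fin m),
          ((∏ i, qu i (u i)) * (∏ i, qj (c i))) * H (PhiFun n m u c))
        = ∑ u : Fin n → Fin 2, ∑ c : Fin n → Option (Fin m),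
            ((∏ i, qu i (u i)) * (∏ i, qj (c i))) * H (PsiFun n m u c) :=
    fun H => Finset.sum_congr rfl fun u _ => hex H u
  have E2fg := convS (fun x => f x * g x)
  rw [E2fg, convS f, convS g]
  -- final combinatorial inequality
  refine psi_core qu qj (fun i a => ENNReal.toReal_nonneg) (fun o => ENNReal.toReal_nonneg)
    ?_ ?_ A f g hfmono hgmono hfA hgA
  · intro i
    rw [hqud]
    have hmeas : ∀ a : Fin 2, a ∈ Finset.univ →
        MeasurableSet ((fun ω => bu (U i ω)) ⁻¹' {a}) :=
      fun a _ => (show Measurable (fun ω => bu (U i ω)) from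
        (Measurable.of_discrete (f := bu)).comp (hUmeas i)) (measurableSet_singleton a)
    rw [← ENNReal.toReal_sum (fun a _ => measure_ne_top μ _),
      sum_measure_preimage_singleton Finset.univ hmeas]
    simp
  · rw [hqjd]
    have hmeas : ∀ o : Option (Fin m), o ∈ Finset.univ → MeasurableSet (jt ⁻¹' {o}) :=
      fun o _ => hjt_pre o
    rw [← ENNReal.toReal_sum (fun o _ => measure_ne_top F _),
      sum_measure_preimage_singleton Finset.univ hmeas]
    simp
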